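/- For a stationary process S with values in a finite linearly ordered alphabet and rank variables R_n, if for every ε > 0 there exists L* such that |H(S_L | S_1^{L−1}) − H(R_L | S_1^{L−1})| < ε for all L > L*, then lim inf_{L→∞} (1/L) H(R_1, ..., R_L) ≥ h(S), the Shannon entropy rate of S. -/

import Mathlib

open MeasureTheory ProbabilityTheory Filter Real

noncomputable def shEntropy {Ω : Type*} [MeasurableSpace Ω] {A : Type*}
    (μ : Measure Ω) (X : Ω → A) : ℝ :=
  -∑' a : A, (μ (X ⁻¹' {a})).toReal * Real.logb 2 (μ (X ⁻¹' {a})).toReal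

noncomputable def condShEntropy {Ω : Type*} [MeasurableSpace Ω] {A B : Type*}
    (μ : Measure Ω) (Y : Ω → A) (Z : Ω → B) : ℝ :=
  ∑' b : B, (μ (Z ⁻¹' {b})).toReal * shEntropy (μ[|Z ⁻¹' {b}]) Y

open Classical in
/-- Rank variable `R_n(ω) = #{i : 1 ≤ i ≤ n, S_i(ω) ≤ S_n(ω)}`. -/
noncomputable def rankVar {Ω A : Type*} [LinearOrder A] (S : ℕ → Ω → A) (n : ℕ) (ω : Ω) : ℕ :=
  ((Finset.Icc 1 n).filter (fun i => S i ω ≤ S n ω)).card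

namespace RankEnt

noncomputable def phi (p : ℝ) : ℝ := -(p * Real.logb 2 p)

@[simp] lemma phi_zero : phi 0 = 0 := by simp [phi]

@[simp] lemma phi_one : phi 1 = 0 := by simp [phi]

lemma phi_nonneg {p : ℝ} (h0 : 0 ≤ p) (h1 : p ≤ 1) : 0 ≤ phi p := by
  have h := Real.logb_nonpos (by norm_num : (1:ℝ) < 2) h0 h1
  have := mul_nonpos_of_nonneg_of_nonpos h0 h
  simp only [phi]; linarith

lemma phi_concave : ConcaveOn ℝ (Set.Ici (0:ℝ)) phi := by
  have h : phi = fun p => (Real.log 2)⁻¹ • Real.negMulLog p := by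
    funext p
    simp only [phi, Real.negMulLog, Real.logb, smul_eq_mul]
    ring
  rw [h]
  exact Real.concaveOn_negMulLog.smul (by positivity)

variable {Ω : Type*} [MeasurableSpace Ω] {A B C : Type*}

lemma shEntropy_tsum (μ : Measure Ω) (X : Ω → A) :
    shEntropy μ X = ∑' a : A, phi ((μ (X ⁻¹' {a})).toReal) := by
  rw [shEntropy, ← tsum_neg]
  rfl

lemma shEntropy_eq_sum (μ : Measure Ω) (X : Ω → A) (F : Finset A) (hF : ∀ ω, X ω ∈ F) :
    shEntropy μ X = ∑ a ∈ F, phi ((μ (X ⁻¹' {a})).toReal) := by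
  rw [shEntropy_tsum]
  refine tsum_eq_sum fun a ha => ?_
  have : X ⁻¹' {a} = ∅ := by
    ext ω; simp only [Set.mem_preimage, Set.mem_singleton_iff, Set.mem_empty_iff_false, iff_false]
    intro hx; exact ha (hx ▸ hF ω)
  simp [this]

lemma condShEntropy_eq_sum (μ : Measure Ω) (Y : Ω → A) (Z : Ω → B) (G : Finset B)
    (hG : ∀ ω, Z ω ∈ G) :
    condShEntropy μ Y Z = ∑ b ∈ G, (μ (Z ⁻¹' {b})).toReal * shEntropy (μ[|Z ⁻¹' {b}]) Y := by
  refine tsum_eq_sum fun b hb => ?_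
  have : Z ⁻¹' {b} = ∅ := by
    ext ω; simp only [Set.mem_preimage, Set.mem_singleton_iff, Set.mem_empty_iff_false, iff_false]
    intro hx; exact hb (hx ▸ hG ω)
  simp [this]

lemma cond_toReal (μ : Measure Ω) {s : Set Ω} (hs : MeasurableSet s) (t : Set Ω) :
    ((μ[|s]) t).toReal = ((μ s).toReal)⁻¹ * (μ (s ∩ t)).toReal := by
  rw [cond_apply hs, ENNReal.toReal_mul, ENNReal.toReal_inv]

lemma cond_le_one (μ : Measure Ω) [IsFiniteMeasure μ] {s : Set Ω} (hs : MeasurableSet s)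
    (t : Set Ω) : (μ[|s]) t ≤ 1 := by
  rw [cond_apply hs]
  by_cases h0 : μ s = 0
  · have : μ (s ∩ t) = 0 :=
      le_antisymm (le_trans (measure_mono Set.inter_subset_left) h0.le) (zero_le)
    simp [this]
  · calc (μ s)⁻¹ * μ (s ∩ t) ≤ (μ s)⁻¹ * μ s :=
          mul_le_mul_right (measure_mono Set.inter_subset_left) _
    _ = 1 := ENNReal.inv_mul_cancel h0 (measure_ne_top μ s)

lemma shEntropy_nonneg' (ν : Measure Ω) (X : Ω → A) (F : Finset A) (hF : ∀ ω, X ω ∈ F)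
    (hν : ∀ t, ν t ≤ 1) : 0 ≤ shEntropy ν X := by
  rw [shEntropy_eq_sum ν X F hF]
  refine Finset.sum_nonneg fun a _ => phi_nonneg ENNReal.toReal_nonneg ?_
  have := hν (X ⁻¹' {a})
  simpa using ENNReal.toReal_mono (by norm_num) this

lemma condShEntropy_nonneg (μ : Measure Ω) [IsFiniteMeasure μ] (Y : Ω → A) (Z : Ω → B)
    (F : Finset A) (hF : ∀ ω, Y ω ∈ F)
    (hmZ : ∀ b, MeasurableSet (Z ⁻¹' {b})) : 0 ≤ condShEntropy μ Y Z := by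
  rw [condShEntropy]
  refine tsum_nonneg fun b => mul_nonneg ENNReal.toReal_nonneg ?_
  exact shEntropy_nonneg' _ Y F hF (cond_le_one μ (hmZ b))

lemma shEntropy_comp_inj (μ : Measure Ω) (X : Ω → A) (F : Finset A) (hF : ∀ ω, X ω ∈ F)
    (e : A → B) (he : Function.Injective e) :
    shEntropy μ (fun ω => e (X ω)) = shEntropy μ X := by
  classical
  rw [shEntropy_eq_sum μ X F hF,
      shEntropy_eq_sum μ _ (F.image e) (fun ω => Finset.mem_image_of_mem e (hF ω)),
      Finset.sum_image (fun a _ b _ hab => he hab)]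
  refine Finset.sum_congr rfl fun a _ => ?_
  have : (fun ω => e (X ω)) ⁻¹' {e a} = X ⁻¹' {a} := by
    ext ω; simp [he.eq_iff]
  rw [this]

lemma chain_rule (μ : Measure Ω) [IsProbabilityMeasure μ] (X : Ω → A) (Y : Ω → B)
    (F : Finset A) (G : Finset B) (hF : ∀ ω, X ω ∈ F) (hG : ∀ ω, Y ω ∈ G)
    (hmX : ∀ a, MeasurableSet (X ⁻¹' {a})) (hmY : ∀ b, MeasurableSet (Y ⁻¹' {b})) :
    shEntropy μ (fun ω => (X ω, Y ω)) = shEntropy μ X + condShEntropy μ Y X := by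
  classical
  have hpre : ∀ a b, ((fun ω => (X ω, Y ω)) ⁻¹' {(a, b)}) = X ⁻¹' {a} ∩ Y ⁻¹' {b} := by
    intro a b; ext ω
    simp [Prod.ext_iff]
  rw [shEntropy_eq_sum μ _ (F ×ˢ G) (fun ω => Finset.mem_product.2 ⟨hF ω, hG ω⟩),
      shEntropy_eq_sum μ X F hF, condShEntropy_eq_sum μ Y X F hF, Finset.sum_product,
      ← Finset.sum_add_distrib]
  refine Finset.sum_congr rfl fun a _ => ?_
  rw [shEntropy_eq_sum (μ[|X ⁻¹' {a}]) Y G hG]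
  have hq : ∀ b, ((μ[|X ⁻¹' {a}]) (Y ⁻¹' {b})).toReal
      = ((μ (X ⁻¹' {a})).toReal)⁻¹ * (μ (X ⁻¹' {a} ∩ Y ⁻¹' {b})).toReal :=
    fun b => cond_toReal μ (hmX a) _
  by_cases hp : (μ (X ⁻¹' {a})).toReal = 0
  · have hμa : μ (X ⁻¹' {a}) = 0 :=
      ((ENNReal.toReal_eq_zero_iff _).1 hp).resolve_right (measure_ne_top μ _)
    have hm0 : ∀ b, μ (X ⁻¹' {a} ∩ Y ⁻¹' {b}) = 0 :=
      fun b => measure_mono_null Set.inter_subset_left hμa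
    simp only [hpre, hm0, hp, ENNReal.toReal_zero, phi_zero, zero_mul, add_zero,
      Finset.sum_const_zero]
  · have hsum : ∑ b ∈ G, (μ (X ⁻¹' {a} ∩ Y ⁻¹' {b})).toReal = (μ (X ⁻¹' {a})).toReal := by
      have hset : X ⁻¹' {a} = ⋃ b ∈ G, (X ⁻¹' {a} ∩ Y ⁻¹' {b}) := by
        ext ω
        simp only [Set.mem_iUnion, Set.mem_inter_iff, Set.mem_preimage, Set.mem_singleton_iff]
        exact ⟨fun hx => ⟨Y ω, hG ω, hx, rfl⟩, fun ⟨b, _, hx, _⟩ => hx⟩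
      have hdisj : (↑G : Set B).PairwiseDisjoint (fun b => X ⁻¹' {a} ∩ Y ⁻¹' {b}) := by
        intro b1 _ b2 _ hne
        refine Set.disjoint_left.2 fun ω h1 h2 => hne ?_
        have e1 : Y ω = b1 := h1.2
        have e2 : Y ω = b2 := h2.2
        rw [← e1, e2]
      conv_rhs => rw [hset]
      rw [measure_biUnion_finset hdisj (fun b _ => (hmX a).inter (hmY b)),
        ENNReal.toReal_sum (fun b _ => measure_ne_top _ _)]
    have hphip : phi ((μ (X ⁻¹' {a})).toReal)
        = ∑ b ∈ G, -((μ (X ⁻¹' {a} ∩ Y ⁻¹' {b})).toReal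
            * Real.logb 2 (μ (X ⁻¹' {a})).toReal) := by
      rw [phi, ← hsum, Finset.sum_mul, ← Finset.sum_neg_distrib]
    rw [hphip, Finset.mul_sum, ← Finset.sum_add_distrib]
    refine Finset.sum_congr rfl fun b _ => ?_
    rw [hpre a b, hq b]
    set p := (μ (X ⁻¹' {a})).toReal
    set m := (μ (X ⁻¹' {a} ∩ Y ⁻¹' {b})).toReal with hmdef
    by_cases hm : m = 0
    · simp [hm]
    · have hpinvm : p⁻¹ * m = m / p := by ring
      rw [phi, phi, hpinvm, Real.logb_div hm hp]
      field_simp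
      ring



variable {Ω : Type*} [MeasurableSpace Ω] {A B C : Type*}

omit [MeasurableSpace Ω] in
lemma comp_preimage_eq [DecidableEq B] (X : Ω → A) (F : Finset A) (hF : ∀ ω, X ω ∈ F)
    (f : A → B) (b : B) :
    (fun ω => f (X ω)) ⁻¹' {b} = ⋃ a ∈ F.filter (fun a => f a = b), X ⁻¹' {a} := by
  ext ω
  simp only [Set.mem_preimage, Set.mem_singleton_iff, Set.mem_iUnion, Finset.mem_filter]
  exact ⟨fun hx => ⟨X ω, ⟨hF ω, hx⟩, rfl⟩, fun ⟨a, ⟨_, hfa⟩, hxa⟩ => by rw [hxa]; exact hfa⟩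

lemma comp_preimage_measurable (X : Ω → A) (F : Finset A) (hF : ∀ ω, X ω ∈ F)
    (hmX : ∀ a, MeasurableSet (X ⁻¹' {a})) (f : A → B) (b : B) :
    MeasurableSet ((fun ω => f (X ω)) ⁻¹' {b}) := by
  classical
  rw [comp_preimage_eq X F hF f b]
  exact Finset.measurableSet_biUnion _ fun a _ => hmX a

lemma shEntropy_comp_le (μ : Measure Ω) [IsProbabilityMeasure μ] (X : Ω → A) (f : A → B)
    (F : Finset A) (hF : ∀ ω, X ω ∈ F) (hmX : ∀ a, MeasurableSet (X ⁻¹' {a})) :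
    shEntropy μ (fun ω => f (X ω)) ≤ shEntropy μ X := by
  classical
  have he : Function.Injective (fun a : A => (f a, a)) := fun a b hab => (Prod.ext_iff.1 hab).2
  have h1 : shEntropy μ X = shEntropy μ (fun ω => ((fun a => (f a, a)) (X ω))) :=
    (shEntropy_comp_inj μ X F hF _ he).symm
  have h2 : shEntropy μ (fun ω => (f (X ω), X ω))
      = shEntropy μ (fun ω => f (X ω)) + condShEntropy μ X (fun ω => f (X ω)) :=
    chain_rule μ (fun ω => f (X ω)) X (F.image f) F
      (fun ω => Finset.mem_image_of_mem f (hF ω)) hF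
      (comp_preimage_measurable X F hF hmX f) hmX
  have h3 : 0 ≤ condShEntropy μ X (fun ω => f (X ω)) :=
    condShEntropy_nonneg μ X _ F hF (comp_preimage_measurable X F hF hmX f)
  rw [h1]
  simp only at h2 ⊢
  linarith

lemma condShEntropy_comp_le (μ : Measure Ω) [IsProbabilityMeasure μ]
    (Y : Ω → A) (Z : Ω → B) (f : B → C) (FA : Finset A) (hFA : ∀ ω, Y ω ∈ FA)
    (G : Finset B) (hG : ∀ ω, Z ω ∈ G)
    (hmY : ∀ a, MeasurableSet (Y ⁻¹' {a})) (hmZ : ∀ b, MeasurableSet (Z ⁻¹' {b})) :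
    condShEntropy μ Y Z ≤ condShEntropy μ Y (fun ω => f (Z ω)) := by
  classical
  rw [condShEntropy_eq_sum μ Y Z G hG,
      condShEntropy_eq_sum μ Y (fun ω => f (Z ω)) (G.image f)
        (fun ω => Finset.mem_image_of_mem f (hG ω)),
      ← Finset.sum_fiberwise_of_maps_to (fun b hb => Finset.mem_image_of_mem f hb)
        (fun b => (μ (Z ⁻¹' {b})).toReal * shEntropy (μ[|Z ⁻¹' {b}]) Y)]
  refine Finset.sum_le_sum fun c _ => ?_
  set t := G.filter (fun b => f b = c) with htdef
  set W := fun ω => f (Z ω) with hWdef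
  have hWpre : W ⁻¹' {c} = ⋃ b ∈ t, Z ⁻¹' {b} := comp_preimage_eq Z G hG f c
  have hsub : ∀ b ∈ t, Z ⁻¹' {b} ⊆ W ⁻¹' {c} := by
    intro b hb ω hω
    rw [hWpre]
    exact Set.mem_biUnion hb hω
  have hdisj : (↑t : Set B).PairwiseDisjoint (fun b => Z ⁻¹' {b}) := by
    intro b1 _ b2 _ hne
    refine Set.disjoint_left.2 fun ω h1 h2 => hne ?_
    have e1 : Z ω = b1 := h1
    have e2 : Z ω = b2 := h2
    rw [← e1, e2]
  have hwsum : ∑ b ∈ t, (μ (Z ⁻¹' {b})).toReal = (μ (W ⁻¹' {c})).toReal := by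
    rw [hWpre, measure_biUnion_finset hdisj (fun b _ => hmZ b),
      ENNReal.toReal_sum (fun b _ => measure_ne_top _ _)]
  have hmW : MeasurableSet (W ⁻¹' {c}) := by
    rw [hWpre]; exact Finset.measurableSet_biUnion _ fun b _ => hmZ b
  have hmsum : ∀ a : A, ∑ b ∈ t, (μ (Z ⁻¹' {b} ∩ Y ⁻¹' {a})).toReal
      = (μ (W ⁻¹' {c} ∩ Y ⁻¹' {a})).toReal := by
    intro a
    have hset : W ⁻¹' {c} ∩ Y ⁻¹' {a} = ⋃ b ∈ t, (Z ⁻¹' {b} ∩ Y ⁻¹' {a}) := by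
      rw [hWpre, Set.iUnion₂_inter]
    have hdisj2 : (↑t : Set B).PairwiseDisjoint (fun b => Z ⁻¹' {b} ∩ Y ⁻¹' {a}) :=
      fun b1 h1 b2 h2 hne =>
        (hdisj h1 h2 hne).mono Set.inter_subset_left Set.inter_subset_left
    rw [hset, measure_biUnion_finset hdisj2 (fun b _ => (hmZ b).inter (hmY a)),
      ENNReal.toReal_sum (fun b _ => measure_ne_top _ _)]
  by_cases hw : (μ (W ⁻¹' {c})).toReal = 0
  · have hb0 : ∀ b ∈ t, (μ (Z ⁻¹' {b})).toReal = 0 := by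
      intro b hb
      have h1 : (μ (Z ⁻¹' {b})).toReal ≤ (μ (W ⁻¹' {c})).toReal :=
        ENNReal.toReal_mono (measure_ne_top _ _) (measure_mono (hsub b hb))
      have h2 : (0:ℝ) ≤ (μ (Z ⁻¹' {b})).toReal := ENNReal.toReal_nonneg
      linarith
    rw [hw, zero_mul]
    refine Finset.sum_nonpos fun b hb => ?_
    rw [hb0 b hb, zero_mul]
  · have hwpos : 0 < (μ (W ⁻¹' {c})).toReal :=
      lt_of_le_of_ne ENNReal.toReal_nonneg (Ne.symm hw)
    set w := (μ (W ⁻¹' {c})).toReal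
    calc ∑ b ∈ t, (μ (Z ⁻¹' {b})).toReal * shEntropy (μ[|Z ⁻¹' {b}]) Y
        = ∑ a ∈ FA, ∑ b ∈ t, (μ (Z ⁻¹' {b})).toReal
            * phi (((μ[|Z ⁻¹' {b}]) (Y ⁻¹' {a})).toReal) := by
          rw [Finset.sum_comm]
          refine Finset.sum_congr rfl fun b _ => ?_
          rw [shEntropy_eq_sum (μ[|Z ⁻¹' {b}]) Y FA hFA, Finset.mul_sum]
      _ ≤ ∑ a ∈ FA, w * phi (((μ[|W ⁻¹' {c}]) (Y ⁻¹' {a})).toReal) := by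
          refine Finset.sum_le_sum fun a _ => ?_
          -- Jensen for this a
          have hqW : ((μ[|W ⁻¹' {c}]) (Y ⁻¹' {a})).toReal
              = w⁻¹ * (μ (W ⁻¹' {c} ∩ Y ⁻¹' {a})).toReal := cond_toReal μ hmW _
          have hweights : ∑ b ∈ t, (μ (Z ⁻¹' {b})).toReal / w = 1 := by
            rw [← Finset.sum_div, hwsum, div_self hw]
          have hjensen := phi_concave.le_map_sum (t := t)
            (w := fun b => (μ (Z ⁻¹' {b})).toReal / w)
            (p := fun b => ((μ[|Z ⁻¹' {b}]) (Y ⁻¹' {a})).toReal)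
            (fun b _ => by positivity) hweights
            (fun b _ => ENNReal.toReal_nonneg)
          have hmix : ∑ b ∈ t, ((μ (Z ⁻¹' {b})).toReal / w)
                • (((μ[|Z ⁻¹' {b}]) (Y ⁻¹' {a})).toReal)
              = ((μ[|W ⁻¹' {c}]) (Y ⁻¹' {a})).toReal := by
            rw [hqW, ← hmsum a, Finset.mul_sum]
            refine Finset.sum_congr rfl fun b hb => ?_
            rw [smul_eq_mul, cond_toReal μ (hmZ b)]
            by_cases hpb : (μ (Z ⁻¹' {b})).toReal = 0
            · have : (μ (Z ⁻¹' {b} ∩ Y ⁻¹' {a})).toReal = 0 := by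
                have h1 : (μ (Z ⁻¹' {b} ∩ Y ⁻¹' {a})).toReal ≤ (μ (Z ⁻¹' {b})).toReal :=
                  ENNReal.toReal_mono (measure_ne_top _ _) (measure_mono Set.inter_subset_left)
                have h2 : (0:ℝ) ≤ (μ (Z ⁻¹' {b} ∩ Y ⁻¹' {a})).toReal := ENNReal.toReal_nonneg
                linarith
              rw [hpb, this]
              ring
            · field_simp
          rw [hmix] at hjensen
          have hmul := mul_le_mul_of_nonneg_left hjensen hwpos.le
          have hLHS : w * ∑ b ∈ t, ((μ (Z ⁻¹' {b})).toReal / w)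
              • (phi (((μ[|Z ⁻¹' {b}]) (Y ⁻¹' {a})).toReal))
              = ∑ b ∈ t, (μ (Z ⁻¹' {b})).toReal
                  * phi (((μ[|Z ⁻¹' {b}]) (Y ⁻¹' {a})).toReal) := by
            rw [Finset.mul_sum]
            refine Finset.sum_congr rfl fun b _ => ?_
            rw [smul_eq_mul]
            field_simp
          rw [hLHS] at hmul
          exact hmul
      _ = w * ∑ a ∈ FA, phi (((μ[|W ⁻¹' {c}]) (Y ⁻¹' {a})).toReal) := by
          rw [Finset.mul_sum]
      _ = w * shEntropy (μ[|W ⁻¹' {c}]) Y := by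
          rw [shEntropy_eq_sum (μ[|W ⁻¹' {c}]) Y FA hFA]



noncomputable def vecF {Ω D : Type*} (X : ℕ → Ω → D) (L : ℕ) : Ω → (Fin L → D) :=
  fun ω => fun i : Fin L => X (i.1 + 1) ω

lemma vec_mem {Ω D : Type*} [DecidableEq D] (X : ℕ → Ω → D) (Fn : ℕ → Finset D)
    (hFn : ∀ n ω, X n ω ∈ Fn n) (L : ℕ) (ω : Ω) :
    vecF X L ω ∈ Fintype.piFinset (fun i : Fin L => Fn (i.1 + 1)) := by
  rw [Fintype.mem_piFinset]
  exact fun i => hFn _ ω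

lemma vec_mble {Ω D : Type*} [MeasurableSpace Ω] (X : ℕ → Ω → D)
    (hm : ∀ n d, MeasurableSet ((X n) ⁻¹' {d})) (L : ℕ) (v : Fin L → D) :
    MeasurableSet ((vecF X L) ⁻¹' {v}) := by
  have : (vecF X L) ⁻¹' {v} = ⋂ i : Fin L, (X (i.1 + 1)) ⁻¹' {v i} := by
    ext ω
    simp only [Set.mem_preimage, Set.mem_singleton_iff, Set.mem_iInter, funext_iff, vecF]
  rw [this]
  exact MeasurableSet.iInter fun i => hm _ _

lemma vec_chain {Ω D : Type*} [MeasurableSpace Ω] (μ : Measure Ω) [IsProbabilityMeasure μ]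
    (X : ℕ → Ω → D) (hm : ∀ n d, MeasurableSet ((X n) ⁻¹' {d}))
    (Fn : ℕ → Finset D) (hFn : ∀ n ω, X n ω ∈ Fn n) (L : ℕ) :
    shEntropy μ (vecF X L) = ∑ k ∈ Finset.range L, condShEntropy μ (X (k+1)) (vecF X k) := by
  classical
  induction L with
  | zero =>
    rw [Finset.sum_range_zero, shEntropy_eq_sum μ (vecF X 0) {Fin.elim0}
      (fun ω => Finset.mem_singleton.2 (funext fun i => i.elim0))]
    have : (vecF X 0) ⁻¹' {Fin.elim0} = Set.univ := by
      ext ω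
      simp only [Set.mem_preimage, Set.mem_singleton_iff, Set.mem_univ, iff_true]
      exact funext fun i => i.elim0
    rw [Finset.sum_singleton, this]
    simp
  | succ L ih =>
    have he : Function.Injective (fun v : Fin (L+1) → D => (Fin.init v, v (Fin.last L))) := by
      intro v w hvw
      have h1 : Fin.init v = Fin.init w := congrArg Prod.fst hvw
      have h2 : v (Fin.last L) = w (Fin.last L) := congrArg Prod.snd hvw
      rw [← Fin.snoc_init_self v, ← Fin.snoc_init_self w, h1, h2]
    have hcomp : (fun ω => ((fun v : Fin (L+1) → D => (Fin.init v, v (Fin.last L)))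
          (vecF X (L+1) ω))) = (fun ω => (vecF X L ω, X (L+1) ω)) := by
      funext ω
      simp only [vecF, Fin.init]
      constructor
    have h1 : shEntropy μ (vecF X (L+1)) = shEntropy μ (fun ω => (vecF X L ω, X (L+1) ω)) := by
      rw [← hcomp]
      exact (shEntropy_comp_inj μ (vecF X (L+1))
        (Fintype.piFinset (fun i : Fin (L+1) => Fn (i.1 + 1))) (vec_mem X Fn hFn (L+1)) _ he).symm
    rw [h1, chain_rule μ (vecF X L) (X (L+1))
        (Fintype.piFinset (fun i : Fin L => Fn (i.1 + 1))) (Fn (L+1))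
        (vec_mem X Fn hFn L) (fun ω => hFn (L+1) ω)
        (vec_mble X hm L) (hm (L+1)),
      Finset.sum_range_succ, ih]


noncomputable def extv {A : Type*} (d : A) (L : ℕ) (v : Fin L → A) (n : ℕ) : A :=
  if h : n - 1 < L then v ⟨n - 1, h⟩ else d

open Classical in
noncomputable def rnk {A : Type*} [LinearOrder A] (d : A) (L : ℕ) (v : Fin L → A) (n : ℕ) : ℕ :=
  ((Finset.Icc 1 n).filter (fun j => extv d L v j ≤ extv d L v n)).card

lemma rank_eq_rnk {Ω A : Type*} [LinearOrder A] (S : ℕ → Ω → A) (d : A) (L n : ℕ)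
    (hnL : n ≤ L) (ω : Ω) :
    rankVar S n ω = rnk d L (vecF S L ω) n := by
  classical
  rcases Nat.eq_zero_or_pos n with hn0 | hn1
  · subst hn0
    rw [rankVar, rnk, Finset.Icc_eq_empty (by omega)]
    simp
  · have hkey : ∀ j, 1 ≤ j → j ≤ L → extv d L (vecF S L ω) j = S j ω := by
      intro j h1 hL2
      have hj : j - 1 < L := by omega
      rw [extv, dif_pos hj]
      show S (j - 1 + 1) ω = S j ω
      rw [Nat.sub_add_cancel h1]
    rw [rankVar, rnk]
    congr 1
    refine Finset.filter_congr fun j hj => ?_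
    rw [Finset.mem_Icc] at hj
    rw [hkey j hj.1 (le_trans hj.2 (le_trans hnL le_rfl)), hkey n hn1 hnL]

end RankEnt

open RankEnt

theorem liminf_rank_entropy_ge_of_condEntropy_close {Ω A : Type*} [MeasurableSpace Ω]
    [Fintype A] [LinearOrder A] [MeasurableSpace A] [MeasurableSingletonClass A]
    (μ : Measure Ω) [IsProbabilityMeasure μ]
    (T : Ω → Ω) (hT : MeasurePreserving T μ μ) (g : Ω → A) (hg : Measurable g)
    (S : ℕ → Ω → A) (hSdef : ∀ n ω, S n ω = g (T^[n - 1] ω))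
    -- the Shannon entropy rate of S
    (h : ℝ)
    (hrate : Filter.Tendsto
      (fun L : ℕ => (1 / (L : ℝ)) * shEntropy μ (fun ω => fun i : Fin L => S (i.1 + 1) ω))
      Filter.atTop (nhds h))
    (hclose : ∀ ε : ℝ, 0 < ε → ∃ Lstar : ℕ, ∀ L : ℕ, Lstar < L →
      |condShEntropy μ (S L) (fun ω => fun i : Fin (L - 1) => S (i.1 + 1) ω)
        - condShEntropy μ (fun ω => rankVar S L ω)
            (fun ω => fun i : Fin (L - 1) => S (i.1 + 1) ω)| < ε) :
    h ≤ Filter.liminf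
      (fun L : ℕ => (1 / (L : ℝ)) *
        shEntropy μ (fun ω => fun i : Fin L => rankVar S (i.1 + 1) ω))
      Filter.atTop := by
  classical
  have hΩ : Nonempty Ω := by
    by_contra hne
    rw [not_nonempty_iff] at hne
    have h1 : μ Set.univ = 1 := measure_univ
    rw [Set.univ_eq_empty_iff.2 hne] at h1
    simp at h1
  have hA : Nonempty A := ⟨g (Classical.arbitrary Ω)⟩
  obtain ⟨d⟩ := hA
  -- measurability of S n
  have hSm : ∀ n, Measurable (S n) := by
    intro n
    have : S n = fun ω => g (T^[n - 1] ω) := funext fun ω => hSdef n ω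
    rw [this]
    exact hg.comp (hT.measurable.iterate _)
  have hSsing : ∀ n (a : A), MeasurableSet ((S n) ⁻¹' {a}) :=
    fun n a => hSm n (measurableSet_singleton a)
  -- ranks as functions of the value process
  have hrank_comp : ∀ n : ℕ, rankVar S n = fun ω => rnk d n (vecF S n ω) n :=
    fun n => funext fun ω => rank_eq_rnk S d n n le_rfl ω
  have hRm : ∀ n m, MeasurableSet ((rankVar S n) ⁻¹' {m}) := by
    intro n m
    rw [hrank_comp n]
    exact comp_preimage_measurable (vecF S n) Finset.univ (fun ω => Finset.mem_univ _)
      (vec_mble S hSsing n) (fun v => rnk d n v n) m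
  have hRfin : ∀ n ω, rankVar S n ω
      ∈ (Finset.univ.image (fun v : Fin n → A => rnk d n v n)) := by
    intro n ω
    rw [congrFun (hrank_comp n) ω]
    exact Finset.mem_image_of_mem _ (Finset.mem_univ _)
  -- chain rules
  have hSchain : ∀ L, shEntropy μ (vecF S L)
      = ∑ k ∈ Finset.range L, condShEntropy μ (S (k+1)) (vecF S k) :=
    vec_chain μ S hSsing (fun _ => Finset.univ) (fun _ _ => Finset.mem_univ _)
  have hRchain : ∀ L, shEntropy μ (vecF (rankVar S) L)
      = ∑ k ∈ Finset.range L, condShEntropy μ (rankVar S (k+1)) (vecF (rankVar S) k) :=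
    vec_chain μ (rankVar S) hRm (fun n => Finset.univ.image (fun v : Fin n → A => rnk d n v n))
      hRfin
  -- rank vector as a function of the value vector
  have hRvec_comp : ∀ L : ℕ,
      (fun ω => (fun v : Fin L → A => (fun i : Fin L => rnk d L v (i.1+1))) (vecF S L ω))
        = vecF (rankVar S) L := by
    intro L
    funext ω
    funext i
    exact (rank_eq_rnk S d L (i.1+1) (Nat.succ_le_of_lt i.2) ω).symm
  -- data processing: conditioning on the finer value vector gives smaller cond. entropy
  have hcr : ∀ k, condShEntropy μ (rankVar S (k+1)) (vecF S k)
      ≤ condShEntropy μ (rankVar S (k+1)) (vecF (rankVar S) k) := by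
    intro k
    have := condShEntropy_comp_le μ (rankVar S (k+1)) (vecF S k)
      (fun v : Fin k → A => (fun i : Fin k => rnk d k v (i.1+1)))
      (Finset.univ.image (fun v : Fin (k+1) → A => rnk d (k+1) v (k+1))) (hRfin (k+1))
      Finset.univ (fun ω => Finset.mem_univ _)
      (hRm (k+1)) (vec_mble S hSsing k)
    rwa [hRvec_comp k] at this
  have hr0 : ∀ k, 0 ≤ condShEntropy μ (rankVar S (k+1)) (vecF (rankVar S) k) :=
    fun k => condShEntropy_nonneg μ _ _
      (Finset.univ.image (fun v : Fin (k+1) → A => rnk d (k+1) v (k+1))) (hRfin (k+1))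
      (vec_mble (rankVar S) hRm k)
  have hub : ∀ L, shEntropy μ (vecF (rankVar S) L) ≤ shEntropy μ (vecF S L) := by
    intro L
    have := shEntropy_comp_le μ (vecF S L)
      (fun v : Fin L → A => (fun i : Fin L => rnk d L v (i.1+1)))
      Finset.univ (fun ω => Finset.mem_univ _) (vec_mble S hSsing L)
    rwa [hRvec_comp L] at this
  have hrate' : Filter.Tendsto (fun L : ℕ => (1 / (L : ℝ)) * shEntropy μ (vecF S L))
      Filter.atTop (nhds h) := hrate
  show h ≤ Filter.liminf
      (fun L : ℕ => (1 / (L : ℝ)) * shEntropy μ (vecF (rankVar S) L)) Filter.atTop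
  refine le_of_forall_pos_le_add fun ε hε => ?_
  obtain ⟨Lstar, hLs⟩ := hclose ε hε
  have hclose' : ∀ k, Lstar ≤ k →
      condShEntropy μ (S (k+1)) (vecF S k) - ε
        ≤ condShEntropy μ (rankVar S (k+1)) (vecF S k) := by
    intro k hk
    have h1 : |condShEntropy μ (S (k+1)) (vecF S k)
        - condShEntropy μ (rankVar S (k+1)) (vecF S k)| < ε := hLs (k+1) (by omega)
    have h2 := abs_lt.1 h1
    linarith [h2.1, h2.2]
  have keyL : ∀ L, Lstar ≤ L →
      shEntropy μ (vecF S L) - shEntropy μ (vecF S Lstar) - L * ε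
        ≤ shEntropy μ (vecF (rankVar S) L) := by
    intro L hL
    rw [hRchain L, hSchain L, hSchain Lstar]
    have hsplitS := Finset.sum_Ico_consecutive
      (fun k => condShEntropy μ (S (k+1)) (vecF S k)) (Nat.zero_le Lstar) hL
    have hsplitR := Finset.sum_Ico_consecutive
      (fun k => condShEntropy μ (rankVar S (k+1)) (vecF (rankVar S) k)) (Nat.zero_le Lstar) hL
    simp only [Finset.range_eq_Ico]
    rw [← hsplitS, ← hsplitR]
    have h4 : ∑ k ∈ Finset.Ico Lstar L, (condShEntropy μ (S (k+1)) (vecF S k) - ε)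
        ≤ ∑ k ∈ Finset.Ico Lstar L, condShEntropy μ (rankVar S (k+1)) (vecF (rankVar S) k) :=
      Finset.sum_le_sum fun k hk =>
        le_trans (hclose' k (Finset.mem_Ico.1 hk).1) (hcr k)
    have h5 : ∑ k ∈ Finset.Ico Lstar L, (condShEntropy μ (S (k+1)) (vecF S k) - ε)
        = ∑ k ∈ Finset.Ico Lstar L, condShEntropy μ (S (k+1)) (vecF S k)
          - ((L - Lstar : ℕ) : ℝ) * ε := by
      rw [Finset.sum_sub_distrib, Finset.sum_const, Nat.card_Ico, nsmul_eq_mul]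
    have h6 : ((L - Lstar : ℕ) : ℝ) * ε ≤ (L : ℝ) * ε := by
      have hc : ((L - Lstar : ℕ) : ℝ) ≤ (L : ℝ) := by exact_mod_cast Nat.sub_le L Lstar
      exact mul_le_mul_of_nonneg_right hc hε.le
    have h7 : (0:ℝ) ≤ ∑ k ∈ Finset.Ico 0 Lstar,
        condShEntropy μ (rankVar S (k+1)) (vecF (rankVar S) k) :=
      Finset.sum_nonneg fun k _ => hr0 k
    linarith
  -- pass to the liminf
  have hb : Filter.Tendsto (fun L : ℕ => (1 / (L : ℝ)) * shEntropy μ (vecF S L)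
      - shEntropy μ (vecF S Lstar) * (1 / (L : ℝ)) - ε) Filter.atTop (nhds (h - ε)) := by
    have h1 := (hrate'.sub
      (tendsto_one_div_atTop_nhds_zero_nat.const_mul (shEntropy μ (vecF S Lstar)))).sub
      (tendsto_const_nhds (x := ε))
    have h2 : h - shEntropy μ (vecF S Lstar) * 0 - ε = h - ε := by ring
    rw [h2] at h1
    exact h1.congr fun L => by ring
  have hev : ∀ᶠ L in Filter.atTop, (fun L : ℕ => (1 / (L : ℝ)) * shEntropy μ (vecF S L)
      - shEntropy μ (vecF S Lstar) * (1 / (L : ℝ)) - ε) L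
      ≤ (fun L : ℕ => (1 / (L : ℝ)) * shEntropy μ (vecF (rankVar S) L)) L := by
    filter_upwards [Filter.eventually_ge_atTop (max Lstar 1)] with L hL
    have hL1 : 1 ≤ L := le_trans (le_max_right _ _) hL
    have hLs2 : Lstar ≤ L := le_trans (le_max_left _ _) hL
    have hLpos : (0:ℝ) < (L : ℝ) := by exact_mod_cast hL1
    have hk := keyL L hLs2
    have h1 := mul_le_mul_of_nonneg_left hk (by positivity : (0:ℝ) ≤ 1 / (L:ℝ))
    have h2 : (1 / (L:ℝ)) * (shEntropy μ (vecF S L) - shEntropy μ (vecF S Lstar) - L * ε)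
        = (1 / (L : ℝ)) * shEntropy μ (vecF S L)
          - shEntropy μ (vecF S Lstar) * (1 / (L : ℝ)) - ε := by
      field_simp
    rw [h2] at h1
    exact h1
  have haub : Filter.IsBoundedUnder (· ≤ ·) Filter.atTop
      (fun L : ℕ => (1 / (L : ℝ)) * shEntropy μ (vecF (rankVar S) L)) := by
    refine (hrate'.isBoundedUnder_le).mono_le (Filter.Eventually.of_forall fun L => ?_)
    exact mul_le_mul_of_nonneg_left (hub L) (by positivity)
  have hacob := haub.isCoboundedUnder_ge
  have hbdb := hb.isBoundedUnder_ge
  have hlim : h - ε ≤ Filter.liminf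
      (fun L : ℕ => (1 / (L : ℝ)) * shEntropy μ (vecF (rankVar S) L)) Filter.atTop := by
    rw [← hb.liminf_eq]
    exact Filter.liminf_le_liminf hev hbdb hacob
  linarith
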